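/- Calderón–Zygmund decomposition for the dyadic ρ-localized maximal operator: let f ∈ L¹(ℝⁿ) be nonnegative, λ > 0, θ > 0, and Ω_λ = {x : M^Δ_{V,θ}f(x) > λ}. Then Ω_λ can be written as a disjoint union of dyadic cubes {Q_j} such that for each j: (i) λ < (ψ_θ(Q_j)|Q_j|)^{-1}∫_{Q_j} f, (ii) (ψ_θ(Q_j)|Q_j|)^{-1}∫_{Q_j} f ≤ (4n)^θ 2ⁿ λ; consequently (iii) f(x) ≤ λ for a.e. x ∉ ∪_j Q_j, and (iv) |Ω_λ| ≤ λ^{-1}∫_{ℝⁿ} f. -/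

import Mathlib

open MeasureTheory Metric ENNReal

noncomputable section

/-- The dyadic cube of generation `k` indexed by `m`. -/
def dyadicCube {n : ℕ} (k : ℤ) (m : Fin n → ℤ) : Set (EuclideanSpace ℝ (Fin n)) :=
  {y | ∀ i, (m i : ℝ) * 2 ^ k ≤ y i ∧ y i < ((m i : ℝ) + 1) * 2 ^ k}

/-- `ψ_θ(Q) = (1 + sidelength(Q)/max_Q ρ)^θ` for a dyadic cube. -/
def psiD {n : ℕ} (ρ : EuclideanSpace ℝ (Fin n) → ℝ) (θ : ℝ) (k : ℤ) (m : Fin n → ℤ) : ℝ :=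
  (1 + (2 : ℝ) ^ k / sSup (ρ '' dyadicCube k m)) ^ θ

/-- The `ψ_θ`-weighted average of `f` over the dyadic cube `(k,m)`. -/
def avgD {n : ℕ} (ρ : EuclideanSpace ℝ (Fin n) → ℝ) (θ : ℝ) (k : ℤ) (m : Fin n → ℤ)
    (f : EuclideanSpace ℝ (Fin n) → ℝ) : ℝ≥0∞ :=
  (ENNReal.ofReal (psiD ρ θ k m) * volume (dyadicCube k m))⁻¹ *
    ∫⁻ y in dyadicCube k m, ENNReal.ofReal (f y)

/-- The dyadic localized maximal operator `M^Δ_{V,θ}`. -/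
def MDyadic {n : ℕ} (ρ : EuclideanSpace ℝ (Fin n) → ℝ) (θ : ℝ)
    (f : EuclideanSpace ℝ (Fin n) → ℝ) (x : EuclideanSpace ℝ (Fin n)) : ℝ≥0∞ :=
  ⨆ (k : ℤ) (m : Fin n → ℤ) (_ : x ∈ dyadicCube k m), avgD ρ θ k m f

namespace CZaux

open Filter

variable {n : ℕ}

abbrev ES (n : ℕ) := EuclideanSpace ℝ (Fin n)

lemma two_zpow_pos (k : ℤ) : (0:ℝ) < 2 ^ k := zpow_pos (by norm_num) k

/-! ### Basic facts about dyadic cubes -/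

lemma dyadicCube_eq_preimage (k : ℤ) (m : Fin n → ℤ) :
    dyadicCube k m = ((MeasurableEquiv.toLp 2 (Fin n → ℝ)).symm) ⁻¹'
      (Set.univ.pi fun i => Set.Ico ((m i : ℝ) * 2 ^ k) (((m i : ℝ) + 1) * 2 ^ k)) := by
  ext y
  constructor
  · exact fun h i _ => h i
  · exact fun h i => h i (Set.mem_univ i)

lemma volume_dyadicCube (k : ℤ) (m : Fin n → ℤ) :
    volume (dyadicCube k m) = ENNReal.ofReal ((2:ℝ) ^ k) ^ n := by
  rw [dyadicCube_eq_preimage,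
    (EuclideanSpace.volume_preserving_symm_measurableEquiv_toLp (Fin n)).measure_preimage
      ((MeasurableSet.univ_pi fun i => measurableSet_Ico).nullMeasurableSet),
    volume_pi_pi]
  have : ∀ i : Fin n, volume (Set.Ico ((m i : ℝ) * 2 ^ k) (((m i : ℝ) + 1) * 2 ^ k))
      = ENNReal.ofReal ((2:ℝ) ^ k) := by
    intro i; rw [Real.volume_Ico]; ring_nf
  simp [this, Finset.prod_const]

lemma measurableSet_dyadicCube (k : ℤ) (m : Fin n → ℤ) : MeasurableSet (dyadicCube k m) := by
  rw [dyadicCube_eq_preimage]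
  exact (MeasurableSet.univ_pi fun i => measurableSet_Ico).preimage
    ((MeasurableEquiv.toLp 2 (Fin n → ℝ)).symm).measurable

lemma volume_dyadicCube_ne_zero (k : ℤ) (m : Fin n → ℤ) : volume (dyadicCube k m) ≠ 0 := by
  rw [volume_dyadicCube]
  exact pow_ne_zero _ (ne_of_gt (ENNReal.ofReal_pos.mpr (two_zpow_pos k)))

lemma volume_dyadicCube_ne_top (k : ℤ) (m : Fin n → ℤ) : volume (dyadicCube k m) ≠ ⊤ := by
  rw [volume_dyadicCube]
  exact ENNReal.pow_ne_top ENNReal.ofReal_ne_top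

/-- the index of the dyadic cube of generation `k` containing `x`. -/
def cubeOf (k : ℤ) (x : ES n) : Fin n → ℤ := fun i => ⌊x i / 2 ^ k⌋

lemma mem_dyadicCube_iff {k : ℤ} {m : Fin n → ℤ} {x : ES n} :
    x ∈ dyadicCube k m ↔ ∀ i, ⌊x i / (2:ℝ) ^ k⌋ = m i := by
  have h2 := two_zpow_pos k
  constructor
  · intro hx i
    rcases hx i with ⟨h1, h3⟩
    rw [Int.floor_eq_iff]
    constructor
    · rw [le_div_iff₀ h2]; linarith
    · rw [div_lt_iff₀ h2]; push_cast; linarith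
  · intro h i
    have := (Int.floor_eq_iff (R := ℝ) (z := m i)).mp (h i)
    rcases this with ⟨h1, h3⟩
    rw [le_div_iff₀ h2] at h1
    rw [div_lt_iff₀ h2] at h3
    constructor
    · linarith
    · push_cast at h3 ⊢; linarith

lemma mem_cubeOf (k : ℤ) (x : ES n) : x ∈ dyadicCube k (cubeOf k x) :=
  mem_dyadicCube_iff.mpr fun _ => rfl

lemma eq_cubeOf_of_mem {k : ℤ} {m : Fin n → ℤ} {x : ES n}
    (hx : x ∈ dyadicCube k m) : m = cubeOf k x :=
  funext fun i => (mem_dyadicCube_iff.mp hx i).symm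

lemma dyadicCube_subset {k k' : ℤ} {m m' : Fin n → ℤ} (hkk : k ≤ k')
    {x : ES n} (hx : x ∈ dyadicCube k m) (hx' : x ∈ dyadicCube k' m') :
    dyadicCube k m ⊆ dyadicCube k' m' := by
  intro y hy i
  have h2 := two_zpow_pos k
  obtain ⟨d, hd⟩ : ∃ d : ℕ, k' = k + d := ⟨(k' - k).toNat, by omega⟩
  subst hd
  have hpow : (2:ℝ) ^ (k + (d:ℤ)) = 2 ^ (d:ℕ) * 2 ^ k := by
    rw [zpow_add₀ (by norm_num : (2:ℝ) ≠ 0)]; rw [zpow_natCast]; ring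
  rcases hx i with ⟨ha1, ha2⟩
  rcases hx' i with ⟨hb1, hb2⟩
  rcases hy i with ⟨hy1, hy2⟩
  rw [hpow] at hb1 hb2 ⊢
  have key1 : (m' i * 2 ^ d : ℤ) ≤ m i := by
    have : ((m' i * 2 ^ d : ℤ) : ℝ) < m i + 1 := by
      push_cast
      nlinarith
    have h' : (m' i * 2 ^ d : ℤ) < m i + 1 := by exact_mod_cast this
    omega
  have key2 : (m i + 1 : ℤ) ≤ (m' i + 1) * 2 ^ d := by
    have : ((m i : ℤ) : ℝ) < ((m' i + 1) * 2 ^ d : ℤ) := by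
      push_cast
      nlinarith
    have h' : (m i : ℤ) < (m' i + 1) * 2 ^ d := by exact_mod_cast this
    omega
  constructor
  · have : ((m' i * 2 ^ d : ℤ) : ℝ) ≤ m i := by exact_mod_cast key1
    push_cast at this
    nlinarith
  · have : ((m i + 1 : ℤ) : ℝ) ≤ ((m' i + 1) * 2 ^ d : ℤ) := by exact_mod_cast key2
    push_cast at this
    nlinarith

lemma corner_mem (k : ℤ) (m : Fin n → ℤ) :
    (WithLp.toLp 2 (fun i => (m i : ℝ) * 2 ^ k) : ES n) ∈ dyadicCube k m := by
  intro i
  have h2 := two_zpow_pos k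
  refine ⟨le_refl _, ?_⟩
  show (m i : ℝ) * 2 ^ k < ((m i : ℝ) + 1) * 2 ^ k
  nlinarith

lemma dyadicCube_nonempty (k : ℤ) (m : Fin n → ℤ) : (dyadicCube k m : Set (ES n)).Nonempty :=
  ⟨_, corner_mem k m⟩

lemma exists_parent (k : ℤ) (m : Fin n → ℤ) :
    ∃ m' : Fin n → ℤ, dyadicCube k m ⊆ dyadicCube (k + 1) m' := by
  obtain ⟨x, hx⟩ := dyadicCube_nonempty (n := n) k m
  exact ⟨cubeOf (k+1) x, dyadicCube_subset (by omega) hx (mem_cubeOf _ x)⟩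

/-! ### Facts about `psiD` -/

lemma sSup_nonneg' {ρ : ES n → ℝ} (hρ : ∀ x, 0 < ρ x) (k : ℤ)
    (m : Fin n → ℤ) : 0 ≤ sSup (ρ '' dyadicCube k m) := by
  by_cases hb : BddAbove (ρ '' dyadicCube k m)
  · obtain ⟨x, hx⟩ := dyadicCube_nonempty k m
    exact le_trans (hρ x).le (le_csSup hb ⟨x, hx, rfl⟩)
  · rw [Real.sSup_of_not_bddAbove hb]

lemma one_le_psiD {ρ : ES n → ℝ} (hρ : ∀ x, 0 < ρ x) {θ : ℝ} (hθ : 0 < θ)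
    (k : ℤ) (m : Fin n → ℤ) : 1 ≤ psiD ρ θ k m := by
  have h0 : (0:ℝ) ≤ 2 ^ k / sSup (ρ '' dyadicCube k m) :=
    div_nonneg (two_zpow_pos k).le (sSup_nonneg' hρ k m)
  calc (1:ℝ) = 1 ^ θ := (Real.one_rpow θ).symm
  _ ≤ _ := Real.rpow_le_rpow (by norm_num) (by linarith) hθ.le

lemma psiD_le {ρ : ES n → ℝ} (hρ : ∀ x, 0 < ρ x) {θ : ℝ} (hθ : 0 < θ)
    {k : ℤ} {m : Fin n → ℤ} {x : ES n} (hx : x ∈ dyadicCube k m) :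
    psiD ρ θ k m ≤ (1 + (2:ℝ) ^ k / ρ x) ^ θ := by
  have hbase : (0:ℝ) ≤ 1 + 2 ^ k / sSup (ρ '' dyadicCube k m) := by
    have := div_nonneg (two_zpow_pos k).le (sSup_nonneg' hρ k m); linarith
  apply Real.rpow_le_rpow hbase _ hθ.le
  have : (2:ℝ) ^ k / sSup (ρ '' dyadicCube k m) ≤ 2 ^ k / ρ x := by
    by_cases hb : BddAbove (ρ '' dyadicCube k m)
    · have hle : ρ x ≤ sSup (ρ '' dyadicCube k m) := le_csSup hb ⟨x, hx, rfl⟩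
      exact div_le_div_of_nonneg_left (two_zpow_pos k).le (hρ x) hle
    · rw [Real.sSup_of_not_bddAbove hb]
      have h0 : (2:ℝ) ^ k / (0:ℝ) = 0 := div_zero _
      rw [h0]
      exact div_nonneg (two_zpow_pos k).le (hρ x).le
  linarith

/-! ### coordinate cubes and the Vitali family -/

lemma coord_dist_le (y x : ES n) (i : Fin n) : |y i - x i| ≤ dist y x := by
  rw [EuclideanSpace.dist_eq]
  have h1 : |y i - x i| = Real.sqrt ((y i - x i)^2) := (Real.sqrt_sq_eq_abs _).symm
  rw [h1]
  apply Real.sqrt_le_sqrt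
  have : (y i - x i)^2 = dist (y i) (x i) ^ 2 := by rw [Real.dist_eq, sq_abs]
  rw [this]
  exact Finset.single_le_sum (f := fun j => dist (y j) (x j) ^ 2)
    (fun j _ => sq_nonneg _) (Finset.mem_univ i)

def coordCube (c : Fin n → ℝ) (R : ℝ) : Set (ES n) :=
  {y | ∀ i, c i - R ≤ y i ∧ y i ≤ c i + R}

lemma coordCube_eq_preimage (c : Fin n → ℝ) (R : ℝ) :
    coordCube c R = ((MeasurableEquiv.toLp 2 (Fin n → ℝ)).symm) ⁻¹'
      (Set.univ.pi fun i => Set.Icc (c i - R) (c i + R)) := by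
  ext y
  constructor
  · exact fun h i _ => h i
  · exact fun h i => h i (Set.mem_univ i)

lemma volume_coordCube (c : Fin n → ℝ) (R : ℝ) :
    volume (coordCube c R) = ENNReal.ofReal (2*R) ^ n := by
  rw [coordCube_eq_preimage,
    (EuclideanSpace.volume_preserving_symm_measurableEquiv_toLp (Fin n)).measure_preimage
      ((MeasurableSet.univ_pi fun i => measurableSet_Icc).nullMeasurableSet),
    volume_pi_pi]
  have : ∀ i : Fin n, volume (Set.Icc (c i - R) (c i + R)) = ENNReal.ofReal (2*R) := by
    intro i; rw [Real.volume_Icc]; ring_nf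
  simp [this, Finset.prod_const]

lemma closedBall_subset_coordCube (x : ES n) (R : ℝ) :
    closedBall x R ⊆ coordCube (fun i => x i) R := by
  intro y hy i
  have := coord_dist_le y x i
  rw [mem_closedBall] at hy
  have h := abs_le.mp (this.trans hy)
  constructor <;> [linarith [h.1]; linarith [h.2]]

lemma coordCube_subset_closedBall (hn : 0 < n) (x : ES n) (r : ℝ) (hr : 0 ≤ r) :
    coordCube (fun i => x i) (r / Real.sqrt n) ⊆ closedBall x r := by
  intro y hy
  have hs : (0:ℝ) < Real.sqrt n := Real.sqrt_pos.mpr (by exact_mod_cast hn)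
  rw [mem_closedBall, EuclideanSpace.dist_eq]
  have hb : ∀ i, dist (y i) (x i) ^ 2 ≤ (r / Real.sqrt n)^2 := by
    intro i
    rcases hy i with ⟨h1, h2⟩
    rw [Real.dist_eq, sq_abs]
    have h3 : |y i - x i| ≤ r / Real.sqrt n := abs_le.mpr ⟨by linarith, by linarith⟩
    calc (y i - x i)^2 = |y i - x i|^2 := (sq_abs _).symm
    _ ≤ (r / Real.sqrt n)^2 := pow_le_pow_left₀ (abs_nonneg _) h3 2
  calc Real.sqrt (∑ i, dist (y i) (x i) ^ 2) ≤ Real.sqrt (n * (r / Real.sqrt n)^2) := by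
        apply Real.sqrt_le_sqrt
        calc (∑ i, dist (y i) (x i) ^ 2) ≤ ∑ _i : Fin n, (r / Real.sqrt n)^2 :=
              Finset.sum_le_sum fun i _ => hb i
        _ = n * (r / Real.sqrt n)^2 := by simp [Finset.sum_const, nsmul_eq_mul]
  _ = r := by
        rw [div_pow, Real.sq_sqrt (by positivity : (0:ℝ) ≤ (n:ℝ))]
        have hne : (n:ℝ) ≠ 0 := by exact_mod_cast hn.ne'
        have : (n:ℝ) * (r^2/(n:ℝ)) = r^2 := by field_simp
        rw [this]
        exact Real.sqrt_sq hr

lemma isClosed_coordCube (c : Fin n → ℝ) (R : ℝ) : IsClosed (coordCube c R) := by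
  have : coordCube c R = ⋂ i, ((fun y : ES n => y i) ⁻¹' Set.Icc (c i - R) (c i + R)) := by
    ext y; simp [coordCube, Set.mem_iInter]
  rw [this]
  exact isClosed_iInter fun i => isClosed_Icc.preimage (PiLp.continuous_apply 2 _ i)

lemma interior_coordCube_nonempty (c : Fin n → ℝ) {R : ℝ} (hR : 0 < R) :
    (interior (coordCube c R)).Nonempty := by
  set O : Set (ES n) := ⋂ i, ((fun y : ES n => y i) ⁻¹' Set.Ioo (c i - R) (c i + R)) with hO
  have hopen : IsOpen O := isOpen_iInter_of_finite fun i =>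
    isOpen_Ioo.preimage (PiLp.continuous_apply 2 _ i)
  have hsub : O ⊆ coordCube c R := by
    intro y hy i
    have := Set.mem_iInter.mp hy i
    exact ⟨this.1.le, this.2.le⟩
  have hc : (WithLp.toLp 2 (fun i => c i) : ES n) ∈ O := by
    apply Set.mem_iInter.mpr
    intro i
    constructor <;> [skip; skip] <;> simp <;> linarith
  exact ⟨_, (hopen.subset_interior_iff.mpr hsub) hc⟩

lemma coordCube_subset_closedBall' {x : ES n} {c : Fin n → ℝ} {R : ℝ} (hR : 0 ≤ R)
    (hx : x ∈ coordCube c R) :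
    coordCube c R ⊆ closedBall x (2 * R * Real.sqrt n) := by
  intro y hy
  rw [mem_closedBall, EuclideanSpace.dist_eq]
  have hb : ∀ i, dist (y i) (x i) ^ 2 ≤ (2*R)^2 := by
    intro i
    rcases hy i with ⟨h1, h2⟩
    rcases hx i with ⟨h3, h4⟩
    rw [Real.dist_eq, sq_abs]
    have h5 : |y i - x i| ≤ 2*R := abs_le.mpr ⟨by linarith, by linarith⟩
    calc (y i - x i)^2 = |y i - x i|^2 := (sq_abs _).symm
    _ ≤ (2*R)^2 := pow_le_pow_left₀ (abs_nonneg _) h5 2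
  calc Real.sqrt (∑ i, dist (y i) (x i) ^ 2) ≤ Real.sqrt (n * (2*R)^2) := by
        apply Real.sqrt_le_sqrt
        calc (∑ i, dist (y i) (x i) ^ 2) ≤ ∑ _i : Fin n, (2*R)^2 :=
              Finset.sum_le_sum fun i _ => hb i
        _ = n * (2*R)^2 := by simp [Finset.sum_const, nsmul_eq_mul]
  _ = 2 * R * Real.sqrt n := by
        rw [Real.sqrt_mul (by positivity) _, Real.sqrt_sq (by positivity)]
        ring

/-- The Vitali family adapted to cubes. -/
def czVitali (hn : 0 < n) : VitaliFamily (volume : Measure (ES n)) := by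
  refine Vitali.vitaliFamily volume (Real.toNNReal ((6 * Real.sqrt n)^n)) fun x => ?_
  have hs : (0:ℝ) < Real.sqrt n := Real.sqrt_pos.mpr (by exact_mod_cast hn)
  refine Filter.Eventually.frequently (eventually_nhdsWithin_of_forall fun r (hr : 0 < r) => ?_)
  calc volume (closedBall x (3 * r)) ≤ volume (coordCube (fun i => x i) (3*r)) :=
        measure_mono (closedBall_subset_coordCube x (3*r))
  _ = ENNReal.ofReal (2*(3*r)) ^ n := volume_coordCube _ _
  _ ≤ ENNReal.ofReal ((6 * Real.sqrt n)^n) *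
      volume (coordCube (fun i => x i) (r / Real.sqrt n)) := by
      rw [volume_coordCube, ← ENNReal.ofReal_pow (by positivity),
        ← ENNReal.ofReal_pow (by positivity), ← ENNReal.ofReal_mul (by positivity), ← mul_pow]
      apply ENNReal.ofReal_le_ofReal
      apply pow_le_pow_left₀ (by positivity)
      rw [mul_comm (6 * Real.sqrt n)]
      have h6 : 2 * (r / Real.sqrt n) * (6 * Real.sqrt n) = 12 * r := by
        field_simp; ring
      rw [h6]; linarith
  _ ≤ (Real.toNNReal ((6 * Real.sqrt n)^n) : ℝ≥0∞) * volume (closedBall x r) := by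
      rw [ENNReal.ofReal]
      exact mul_le_mul_right (measure_mono (coordCube_subset_closedBall hn x r hr.le)) _

lemma czVitali_setsAt (hn : 0 < n) (x : ES n) : (czVitali hn).setsAt x =
    {a | IsClosed a ∧ (interior a).Nonempty ∧
      ∃ r, a ⊆ closedBall x r ∧
        volume (closedBall x (3*r)) ≤ (Real.toNNReal ((6 * Real.sqrt n)^n)) * volume a} := rfl

/-! ### closed dyadic cubes -/

def closedCube (k : ℤ) (m : Fin n → ℤ) : Set (ES n) :=
  coordCube (fun i => (m i : ℝ) * 2^k + 2^k/2) (2^k/2)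

lemma mem_closedCube {k : ℤ} {m : Fin n → ℤ} {y : ES n} :
    y ∈ closedCube k m ↔ ∀ i, (m i : ℝ) * 2^k ≤ y i ∧ y i ≤ ((m i : ℝ) + 1) * 2^k := by
  constructor
  · intro h i; rcases h i with ⟨h1, h2⟩; constructor <;> [linarith; nlinarith]
  · intro h i; rcases h i with ⟨h1, h2⟩; constructor <;> [linarith; nlinarith]

lemma dyadicCube_subset_closedCube (k : ℤ) (m : Fin n → ℤ) :
    dyadicCube k m ⊆ closedCube k m := fun _ hy => mem_closedCube.mpr fun i =>
  ⟨(hy i).1, (hy i).2.le⟩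

lemma volume_closedCube (k : ℤ) (m : Fin n → ℤ) :
    volume (closedCube k m) = ENNReal.ofReal ((2:ℝ)^k) ^ n := by
  rw [closedCube, volume_coordCube]
  congr 2
  ring

lemma closedCube_ae_eq (k : ℤ) (m : Fin n → ℤ) :
    (closedCube k m : Set (ES n)) =ᵐ[volume] dyadicCube k m := by
  rw [MeasureTheory.ae_eq_set]
  constructor
  · have h := measure_diff (dyadicCube_subset_closedCube k m)
      (measurableSet_dyadicCube k m).nullMeasurableSet (volume_dyadicCube_ne_top k m)
    rw [h, volume_closedCube, volume_dyadicCube, tsub_self]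
  · rw [Set.diff_eq_empty.mpr (dyadicCube_subset_closedCube k m)]
    exact measure_empty

lemma closedCube_mem_setsAt (hn : 0 < n) {k : ℤ} {m : Fin n → ℤ} {x : ES n}
    (hx : x ∈ closedCube k m) : closedCube k m ∈ (czVitali hn).setsAt x := by
  rw [czVitali_setsAt]
  have h2 := two_zpow_pos k
  have hs : (0:ℝ) < Real.sqrt n := Real.sqrt_pos.mpr (by exact_mod_cast hn)
  refine ⟨isClosed_coordCube _ _, interior_coordCube_nonempty _ (by positivity),
    ⟨2 * ((2:ℝ)^k/2) * Real.sqrt n, coordCube_subset_closedBall' (by positivity) hx, ?_⟩⟩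
  calc volume (closedBall x (3 * (2 * ((2:ℝ)^k/2) * Real.sqrt n)))
      ≤ volume (coordCube (fun i => x i) (3 * (2 * ((2:ℝ)^k/2) * Real.sqrt n))) :=
        measure_mono (closedBall_subset_coordCube x _)
  _ = ENNReal.ofReal (2*(3 * (2 * ((2:ℝ)^k/2) * Real.sqrt n))) ^ n := volume_coordCube _ _
  _ = (Real.toNNReal ((6 * Real.sqrt n)^n)) * volume (closedCube k m) := by
      rw [volume_closedCube]
      have h1 : (2:ℝ)*(3 * (2 * ((2:ℝ)^k/2) * Real.sqrt n)) = (6 * Real.sqrt n) * 2^k := by ring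
      rw [h1, ENNReal.ofReal_mul (by positivity), mul_pow]
      congr 1
      rw [← ENNReal.ofReal_pow (by positivity)]
      rfl

lemma tendsto_two_zpow_neg :
    Tendsto (fun j : ℕ => (2:ℝ) ^ (-(j:ℤ))) atTop (nhds 0) := by
  have h : ∀ j : ℕ, (2:ℝ) ^ (-(j:ℤ)) = (1/2 : ℝ) ^ j := by
    intro j
    rw [zpow_neg, zpow_natCast]
    rw [one_div, inv_pow]
  simp only [h]
  exact tendsto_pow_atTop_nhds_zero_of_lt_one (by norm_num) (by norm_num)

lemma tendsto_closedCube (hn : 0 < n) (x : ES n) :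
    Tendsto (fun j : ℕ => closedCube (-(j:ℤ)) (cubeOf (-(j:ℤ)) x)) atTop
      ((czVitali hn).filterAt x) := by
  have hs : (0:ℝ) < Real.sqrt n := Real.sqrt_pos.mpr (by exact_mod_cast hn)
  have hmem : ∀ j : ℕ, x ∈ closedCube (-(j:ℤ)) (cubeOf (-(j:ℤ)) x) := fun j =>
    dyadicCube_subset_closedCube _ _ (mem_cubeOf _ x)
  rw [VitaliFamily.tendsto_filterAt_iff]
  constructor
  · exact Filter.Eventually.of_forall fun j => closedCube_mem_setsAt hn (hmem j)
  · intro ε hε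
    have ht : Tendsto (fun j : ℕ => 2 * ((2:ℝ)^(-(j:ℤ))/2) * Real.sqrt n) atTop (nhds 0) := by
      have h := ((tendsto_two_zpow_neg.div_const 2).const_mul (2:ℝ)).mul_const (Real.sqrt n)
      simpa using h
    filter_upwards [ht.eventually_lt_const hε] with j hj
    exact (coordCube_subset_closedBall' (by positivity) (hmem j)).trans
      (closedBall_subset_closedBall hj.le)

lemma exists_pow_two_le {a : ℝ} : ∃ N : ℕ, a ≤ 2 ^ N := by
  obtain ⟨N, hN⟩ := pow_unbounded_of_one_lt a (by norm_num : (1:ℝ) < 2)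
  exact ⟨N, hN.le⟩

end CZaux
namespace CZaux

lemma enn_le_of_inv_mul {A I L : ℝ≥0∞} (hA0 : A ≠ 0) (hAt : A ≠ ⊤) (h : A⁻¹ * I ≤ L) :
    I ≤ A * L := (ENNReal.inv_mul_le_iff hA0 hAt).mp h

lemma enn_inv_mul_le {A I L : ℝ≥0∞} (hA0 : A ≠ 0) (hAt : A ≠ ⊤) (h : I ≤ A * L) :
    A⁻¹ * I ≤ L := (ENNReal.inv_mul_le_iff hA0 hAt).mpr h

lemma enn_vol_le {A I L v : ℝ≥0∞} (hA0 : A ≠ 0) (hAt : A ≠ ⊤) (hL0 : L ≠ 0) (hLt : L ≠ ⊤)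
    (hv : v ≤ A) (h : L < A⁻¹ * I) : v ≤ L⁻¹ * I := by
  have h1 : A * L ≤ I := by
    calc A * L ≤ A * (A⁻¹ * I) := mul_le_mul_right h.le A
    _ = (A * A⁻¹) * I := (mul_assoc _ _ _).symm
    _ = I := by rw [ENNReal.mul_inv_cancel hA0 hAt, one_mul]
  calc v = L⁻¹ * (L * v) := by rw [← mul_assoc, ENNReal.inv_mul_cancel hL0 hLt, one_mul]
  _ ≤ L⁻¹ * I := by
      apply mul_le_mul_right
      calc L * v ≤ L * A := mul_le_mul_right hv L
      _ = A * L := mul_comm _ _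
      _ ≤ I := h1

lemma enn_parent {A Ap I Ip L CE : ℝ≥0∞} (hA0 : A ≠ 0) (hAt : A ≠ ⊤) (hAp0 : Ap ≠ 0)
    (hApt : Ap ≠ ⊤) (hI : I ≤ Ip) (hp : Ap⁻¹ * Ip ≤ L) (hcons : Ap ≤ CE * A) :
    A⁻¹ * I ≤ CE * L := by
  have h1 : Ip ≤ Ap * L := (ENNReal.inv_mul_le_iff hAp0 hApt).mp hp
  have h2 : I ≤ CE * A * L := le_trans hI (le_trans h1 (mul_le_mul_left hcons L))
  rw [ENNReal.inv_mul_le_iff hA0 hAt, mul_left_comm]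
  exact h2.trans (le_of_eq (by ring))

lemma le_MDyadic {n : ℕ} {ρ : ES n → ℝ} {θ : ℝ} {f : ES n → ℝ} {x : ES n} {k : ℤ}
    {m : Fin n → ℤ} (hx : x ∈ dyadicCube k m) : avgD ρ θ k m f ≤ MDyadic ρ θ f x := by
  unfold MDyadic
  exact le_iSup₂_of_le k m (le_iSup (fun _ => avgD ρ θ k m f) hx)

end CZaux

open CZaux Filter in
/-- Calderón–Zygmund decomposition for `M^Δ_{V,θ}`. -/
theorem stmt9 {n : ℕ} (hn : 0 < n) (ρ : EuclideanSpace ℝ (Fin n) → ℝ) (hρ : ∀ x, 0 < ρ x)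
    (θ lam : ℝ) (hθ : 0 < θ) (hlam : 0 < lam)
    (hconsist : ∀ (k : ℤ) (m m' : Fin n → ℤ),
      dyadicCube k m ⊆ dyadicCube (k + 1) m' →
        ENNReal.ofReal (psiD ρ θ (k + 1) m') * volume (dyadicCube (k + 1) m' :
            Set (EuclideanSpace ℝ (Fin n)))
          ≤ ENNReal.ofReal ((4 * n) ^ θ * 2 ^ n) *
            (ENNReal.ofReal (psiD ρ θ k m) * volume (dyadicCube k m)))
    (f : EuclideanSpace ℝ (Fin n) → ℝ) (hf0 : ∀ x, 0 ≤ f x) (hf : Integrable f volume) :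
    ∃ S : Set (ℤ × (Fin n → ℤ)),
      (S.Pairwise fun j j' => Disjoint (dyadicCube j.1 j.2) (dyadicCube j'.1 j'.2)) ∧
      ({x | ENNReal.ofReal lam < MDyadic ρ θ f x} = ⋃ j ∈ S, dyadicCube j.1 j.2) ∧
      (∀ j ∈ S, ENNReal.ofReal lam < avgD ρ θ j.1 j.2 f ∧
        avgD ρ θ j.1 j.2 f ≤ ENNReal.ofReal ((4 * n) ^ θ * 2 ^ n * lam)) ∧
      (∀ᵐ x, x ∉ (⋃ j ∈ S, dyadicCube j.1 j.2) → f x ≤ lam) ∧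
      volume {x | ENNReal.ofReal lam < MDyadic ρ θ f x}
        ≤ ENNReal.ofReal (lam⁻¹ * ∫ x, f x) := by
  classical
  have hA0 : ∀ (k : ℤ) (m : Fin n → ℤ),
      ENNReal.ofReal (psiD ρ θ k m) * volume (dyadicCube k m) ≠ 0 := fun k m =>
    mul_ne_zero
      (ne_of_gt (ENNReal.ofReal_pos.mpr (lt_of_lt_of_le one_pos (one_le_psiD hρ hθ k m))))
      (volume_dyadicCube_ne_zero k m)
  have hAtop : ∀ (k : ℤ) (m : Fin n → ℤ),
      ENNReal.ofReal (psiD ρ θ k m) * volume (dyadicCube k m) ≠ ⊤ := fun k m =>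
    ENNReal.mul_ne_top ENNReal.ofReal_ne_top (volume_dyadicCube_ne_top k m)
  have hvolA : ∀ (k : ℤ) (m : Fin n → ℤ),
      volume (dyadicCube k m) ≤ ENNReal.ofReal (psiD ρ θ k m) * volume (dyadicCube k m) := by
    intro k m
    calc volume (dyadicCube k m) = 1 * volume (dyadicCube k m) := (one_mul _).symm
    _ ≤ _ := mul_le_mul_left (by
        rw [← ENNReal.ofReal_one]
        exact ENNReal.ofReal_le_ofReal (one_le_psiD hρ hθ k m)) _
  -- decay of averages at large scales
  have hK : ∃ K : ℤ, ∀ k, K ≤ k → ∀ m : Fin n → ℤ, avgD ρ θ k m f ≤ ENNReal.ofReal lam := by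
    obtain ⟨N, hN⟩ := exists_pow_two_le (a := (∫⁻ x, ENNReal.ofReal (f x)).toReal / lam)
    refine ⟨(N : ℤ), fun k hk m => ?_⟩
    have hk0 : (0:ℤ) ≤ k := le_trans (Int.ofNat_nonneg N) hk
    have hIt : (∫⁻ x, ENNReal.ofReal (f x)) ≠ ⊤ := hf.lintegral_lt_top.ne
    have hIle : (∫⁻ x, ENNReal.ofReal (f x))
        ≤ ENNReal.ofReal lam * ENNReal.ofReal ((2:ℝ)^k) := by
      have h2 : ((2:ℝ)^(N:ℤ)) ≤ 2^k := zpow_le_zpow_right₀ one_le_two hk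
      have h2' : (∫⁻ x, ENNReal.ofReal (f x)).toReal / lam ≤ (2:ℝ)^k := by
        have h2'' : ((2:ℝ)^(N:ℕ)) ≤ (2:ℝ)^k := by rwa [zpow_natCast] at h2
        exact le_trans hN h2''
      have h3 : (∫⁻ x, ENNReal.ofReal (f x)).toReal ≤ lam * 2^k := by
        rw [div_le_iff₀ hlam] at h2'; linarith [h2']
      calc (∫⁻ x, ENNReal.ofReal (f x)) = ENNReal.ofReal (∫⁻ x, ENNReal.ofReal (f x)).toReal :=
            (ENNReal.ofReal_toReal hIt).symm
      _ ≤ ENNReal.ofReal (lam * 2^k) := ENNReal.ofReal_le_ofReal h3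
      _ = _ := ENNReal.ofReal_mul hlam.le
    show (ENNReal.ofReal (psiD ρ θ k m) * volume (dyadicCube k m))⁻¹ *
        (∫⁻ y in dyadicCube k m, ENNReal.ofReal (f y)) ≤ ENNReal.ofReal lam
    apply enn_inv_mul_le (hA0 k m) (hAtop k m)
    calc (∫⁻ y in dyadicCube k m, ENNReal.ofReal (f y)) ≤ ∫⁻ x, ENNReal.ofReal (f x) :=
          lintegral_mono' Measure.restrict_le_self le_rfl
    _ ≤ ENNReal.ofReal lam * ENNReal.ofReal ((2:ℝ)^k) := hIle
    _ ≤ ENNReal.ofReal lam * volume (dyadicCube k m) := by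
        apply mul_le_mul_right
        rw [volume_dyadicCube]
        have hb : (1:ℝ≥0∞) ≤ ENNReal.ofReal ((2:ℝ)^k) := by
          rw [← ENNReal.ofReal_one]
          apply ENNReal.ofReal_le_ofReal
          calc (1:ℝ) = 2^(0:ℤ) := by norm_num
          _ ≤ 2^k := zpow_le_zpow_right₀ one_le_two hk0
        exact le_self_pow₀ hb hn.ne'
    _ ≤ ENNReal.ofReal lam * (ENNReal.ofReal (psiD ρ θ k m) * volume (dyadicCube k m)) :=
        mul_le_mul_right (hvolA k m) _
    _ = _ := mul_comm _ _
  obtain ⟨K, hKprop⟩ := hK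
  -- the maximal cubes
  set good : ℤ × (Fin n → ℤ) → Prop := fun j => ENNReal.ofReal lam < avgD ρ θ j.1 j.2 f
    with hgood_def
  set S : Set (ℤ × (Fin n → ℤ)) := {j | good j ∧ ∀ l (m' : Fin n → ℤ), j.1 < l →
      dyadicCube j.1 j.2 ⊆ dyadicCube l m' → ¬ good (l, m')} with hS_def
  -- covering identity
  have hcover : {x | ENNReal.ofReal lam < MDyadic ρ θ f x} = ⋃ j ∈ S, dyadicCube j.1 j.2 := by
    ext x
    simp only [Set.mem_setOf_eq, Set.mem_iUnion]
    constructor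
    · intro hx
      rw [MDyadic] at hx
      simp only [lt_iSup_iff] at hx
      obtain ⟨k, m, hxm, hk⟩ := hx
      have hPk : good (k, cubeOf k x) := by
        rwa [hgood_def, ← eq_cubeOf_of_mem hxm]
      obtain ⟨k₀, hPk₀, hmax⟩ := Int.exists_greatest_of_bdd
        (P := fun l => good (l, cubeOf l x))
        ⟨K, fun l hl => by
          by_contra hlK
          push_neg at hlK
          exact absurd (hKprop l (by omega) (cubeOf l x)) (not_le.mpr hl)⟩
        ⟨k, hPk⟩
      refine ⟨(k₀, cubeOf k₀ x), ⟨hPk₀, ?_⟩, mem_cubeOf k₀ x⟩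
      intro l m' hl hsub hgl
      have hxl : x ∈ dyadicCube l m' := hsub (mem_cubeOf k₀ x)
      have : good (l, cubeOf l x) := by rwa [← eq_cubeOf_of_mem hxl]
      exact absurd (hmax l this) (not_le.mpr hl)
    · rintro ⟨j, hjS, hxj⟩
      exact lt_of_lt_of_le hjS.1 (le_MDyadic hxj)
  -- pairwise disjointness
  have hdisj : S.Pairwise fun j j' => Disjoint (dyadicCube j.1 j.2) (dyadicCube j'.1 j'.2) := by
    have key : ∀ j ∈ S, ∀ j' ∈ S, j.1 ≤ j'.1 →
        ¬ Disjoint (dyadicCube j.1 j.2) (dyadicCube j'.1 j'.2) → j = j' := by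
      rintro ⟨k, m⟩ hj ⟨k', m'⟩ hj' hle hnd
      obtain ⟨x, hx, hx'⟩ := Set.not_disjoint_iff.mp hnd
      rcases lt_or_eq_of_le hle with hlt | heq
      · exact absurd hj'.1 (hj.2 k' m' hlt (dyadicCube_subset hle hx hx'))
      · simp only at heq
        subst heq
        have hmm : m = m' := (eq_cubeOf_of_mem hx).trans (eq_cubeOf_of_mem hx').symm
        rw [hmm]
    intro j hj j' hj' hne
    by_contra hnd
    rcases le_total j.1 j'.1 with h | h
    · exact hne (key j hj j' hj' h hnd)
    · exact hne ((key j' hj' j hj h fun hd => hnd hd.symm).symm)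
  -- properties (i) and (ii)
  have hii : ∀ j ∈ S, ENNReal.ofReal lam < avgD ρ θ j.1 j.2 f ∧
      avgD ρ θ j.1 j.2 f ≤ ENNReal.ofReal ((4 * n) ^ θ * 2 ^ n * lam) := by
    rintro ⟨k, m⟩ hj
    refine ⟨hj.1, ?_⟩
    obtain ⟨m', hsub⟩ := exists_parent k m
    have hng : ¬ good (k+1, m') := hj.2 (k+1) m' (by omega) hsub
    have hple : avgD ρ θ (k+1) m' f ≤ ENNReal.ofReal lam := not_lt.mp hng
    have hbound : avgD ρ θ k m f
        ≤ ENNReal.ofReal ((4 * n) ^ θ * 2 ^ n) * ENNReal.ofReal lam := by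
      show (ENNReal.ofReal (psiD ρ θ k m) * volume (dyadicCube k m))⁻¹ *
          (∫⁻ y in dyadicCube k m, ENNReal.ofReal (f y)) ≤ _
      exact enn_parent (hA0 k m) (hAtop k m) (hA0 (k+1) m') (hAtop (k+1) m')
        (lintegral_mono_set hsub) hple (hconsist k m m' hsub)
    calc avgD ρ θ k m f ≤ _ := hbound
    _ = ENNReal.ofReal ((4 * n) ^ θ * 2 ^ n * lam) := by
        rw [← ENNReal.ofReal_mul (by positivity)]
  -- property (iii): a.e. bound outside the cubes
  have hiii : ∀ᵐ x, x ∉ (⋃ j ∈ S, dyadicCube j.1 j.2) → f x ≤ lam := by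
    filter_upwards [(czVitali hn).ae_tendsto_average hf.locallyIntegrable] with x hx hxout
    have hM : MDyadic ρ θ f x ≤ ENNReal.ofReal lam := by
      by_contra h
      exact hxout (hcover ▸ Set.mem_setOf.mpr (not_le.mp h))
    have havgle : ∀ k : ℤ, avgD ρ θ k (cubeOf k x) f ≤ ENNReal.ofReal lam := fun k =>
      le_trans (le_MDyadic (mem_cubeOf k x)) hM
    have key : ∀ j : ℕ, (⨍ y in closedCube (-(j:ℤ)) (cubeOf (-(j:ℤ)) x), f y)
        ≤ psiD ρ θ (-(j:ℤ)) (cubeOf (-(j:ℤ)) x) * lam := by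
      intro j
      set k : ℤ := -(j:ℤ) with hk
      set m : Fin n → ℤ := cubeOf k x with hm
      have hψ0 : (0:ℝ) ≤ psiD ρ θ k m := le_trans zero_le_one (one_le_psiD hρ hθ k m)
      have hpow : (0:ℝ) < ((2:ℝ)^k)^n := by positivity
      have h1 : (∫⁻ y in dyadicCube k m, ENNReal.ofReal (f y))
          ≤ (ENNReal.ofReal (psiD ρ θ k m) * volume (dyadicCube k m)) * ENNReal.ofReal lam :=
        enn_le_of_inv_mul (hA0 k m) (hAtop k m) (havgle k)
      have h2 : ENNReal.ofReal (∫ y in dyadicCube k m, f y)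
          = ∫⁻ y in dyadicCube k m, ENNReal.ofReal (f y) :=
        ofReal_integral_eq_lintegral_ofReal hf.integrableOn (ae_of_all _ hf0)
      have h3 : (ENNReal.ofReal (psiD ρ θ k m) * volume (dyadicCube k m)) * ENNReal.ofReal lam
          = ENNReal.ofReal (psiD ρ θ k m * ((2:ℝ)^k)^n * lam) := by
        rw [volume_dyadicCube, ← ENNReal.ofReal_pow (two_zpow_pos k).le,
          ← ENNReal.ofReal_mul hψ0, ← ENNReal.ofReal_mul (by positivity)]
      have h4 : (∫ y in dyadicCube k m, f y) ≤ psiD ρ θ k m * ((2:ℝ)^k)^n * lam := by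
        rw [h3, ← h2] at h1
        exact (ENNReal.ofReal_le_ofReal_iff (by positivity)).mp h1
      rw [setAverage_eq, setIntegral_congr_set (closedCube_ae_eq k m)]
      have h6 : volume.real (closedCube k m : Set (EuclideanSpace ℝ (Fin n)))
          = ((2:ℝ)^k)^n := by
        rw [measureReal_def, volume_closedCube, ENNReal.toReal_pow, ENNReal.toReal_ofReal (two_zpow_pos k).le]
      rw [h6, smul_eq_mul, inv_mul_le_iff₀ hpow]
      calc (∫ y in dyadicCube k m, f y) ≤ psiD ρ θ k m * ((2:ℝ)^k)^n * lam := h4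
      _ = ((2:ℝ)^k)^n * (psiD ρ θ k m * lam) := by ring
    have hub : Tendsto (fun j : ℕ => (1 + (2:ℝ)^(-(j:ℤ)) / ρ x)^θ) atTop (nhds 1) := by
      have h1 : Tendsto (fun j : ℕ => 1 + (2:ℝ)^(-(j:ℤ)) / ρ x) atTop (nhds 1) := by
        have h := (tendsto_two_zpow_neg.div_const (ρ x)).const_add (1:ℝ)
        simpa using h
      have h2 := h1.rpow_const (Or.inr hθ.le)
      simpa [Real.one_rpow] using h2
    have hψt : Tendsto (fun j : ℕ => psiD ρ θ (-(j:ℤ)) (cubeOf (-(j:ℤ)) x)) atTop (nhds 1) :=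
      tendsto_of_tendsto_of_tendsto_of_le_of_le tendsto_const_nhds hub
        (fun j => one_le_psiD hρ hθ _ _) (fun j => psiD_le hρ hθ (mem_cubeOf _ x))
    have hbt : Tendsto (fun j : ℕ => psiD ρ θ (-(j:ℤ)) (cubeOf (-(j:ℤ)) x) * lam) atTop
        (nhds lam) := by
      have h := hψt.mul_const lam
      simpa using h
    have havgt : Tendsto (fun j : ℕ => ⨍ y in closedCube (-(j:ℤ)) (cubeOf (-(j:ℤ)) x), f y)
        atTop (nhds (f x)) := hx.comp (tendsto_closedCube hn x)
    exact le_of_tendsto_of_tendsto' havgt hbt key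
  -- property (iv)
  have hiv : volume {x | ENNReal.ofReal lam < MDyadic ρ θ f x}
      ≤ ENNReal.ofReal (lam⁻¹ * ∫ x, f x) := by
    have hL0 : (ENNReal.ofReal lam) ≠ 0 := ne_of_gt (ENNReal.ofReal_pos.mpr hlam)
    have hmeas : ∀ j ∈ S, MeasurableSet (dyadicCube j.1 j.2) := fun j _ =>
      measurableSet_dyadicCube _ _
    rw [hcover, measure_biUnion (Set.to_countable S) hdisj hmeas]
    have hdisj' : Pairwise (Function.onFun Disjoint
        fun p : S => dyadicCube (p : ℤ × (Fin n → ℤ)).1 (p : ℤ × (Fin n → ℤ)).2) := by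
      intro p q hpq
      exact hdisj p.2 q.2 (fun h => hpq (Subtype.ext h))
    calc (∑' p : S, volume (dyadicCube (p : ℤ × (Fin n → ℤ)).1 (p : ℤ × (Fin n → ℤ)).2))
        ≤ ∑' p : S, (ENNReal.ofReal lam)⁻¹ *
          ∫⁻ y in dyadicCube (p : ℤ × (Fin n → ℤ)).1 (p : ℤ × (Fin n → ℤ)).2,
            ENNReal.ofReal (f y) := by
          apply ENNReal.tsum_le_tsum
          intro p
          exact enn_vol_le (hA0 _ _) (hAtop _ _) hL0 ENNReal.ofReal_ne_top (hvolA _ _) p.2.1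
    _ = (ENNReal.ofReal lam)⁻¹ * ∑' p : S,
          ∫⁻ y in dyadicCube (p : ℤ × (Fin n → ℤ)).1 (p : ℤ × (Fin n → ℤ)).2,
            ENNReal.ofReal (f y) := ENNReal.tsum_mul_left
    _ = (ENNReal.ofReal lam)⁻¹ * ∫⁻ y in ⋃ p : S,
          dyadicCube (p : ℤ × (Fin n → ℤ)).1 (p : ℤ × (Fin n → ℤ)).2, ENNReal.ofReal (f y) := by
          rw [lintegral_iUnion (fun p => measurableSet_dyadicCube _ _) hdisj']
    _ ≤ (ENNReal.ofReal lam)⁻¹ * ∫⁻ y, ENNReal.ofReal (f y) :=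
          mul_le_mul_right (lintegral_mono' Measure.restrict_le_self le_rfl) _
    _ = (ENNReal.ofReal lam)⁻¹ * ENNReal.ofReal (∫ y, f y) := by
          rw [ofReal_integral_eq_lintegral_ofReal hf (ae_of_all _ hf0)]
    _ = ENNReal.ofReal (lam⁻¹ * ∫ y, f y) := by
          rw [← ENNReal.ofReal_inv_of_pos hlam,
            ← ENNReal.ofReal_mul (inv_nonneg.mpr hlam.le)]
  exact ⟨S, hdisj, hcover, hii, hiii, hiv⟩
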